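/- Analytic core of Theorem 5.2 for spherical orbits: Let k > 0, C₁ ≥ 0, and C₄ ≥ 4/9. Define Ŝ := (8π/k²) · (sqrt((1+C₁)² + 2/9) − (1+C₁))^{−2} and S_lower := Ŝ · (9C₄)^{3C₄ − 4/3}. Let S : [0,∞) → (0,∞) be locally Lipschitz such that at almost every λ ≥ 0, S is differentiable and |S'(λ)/S(λ) − (2/3)k²| ≤ 8π/S(λ) + 2(1+C₁) k sqrt(8π/S(λ)) + k² C₄ e^{−k²λ/3}. If S(0) ≥ S_lower, then there exists λ₀ ∈ [0,∞) such that for all λ₁, λ₂ with λ₀ ≤ λ₁ < λ₂ one has 1/2 ≤ S(λ₂) / (S(λ₁) e^{(2/3)k²(λ₂−λ₁)}) ≤ 2. -/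

import Mathlib

open Set MeasureTheory Real Filter Topology

theorem lip_slope_bound {K : NNReal} {h : ℝ → ℝ} (hK : LipschitzWith K h)
    {x t : ℝ} (ht : 0 < t) : |(h (x + t) - h x) / t| ≤ K := by
  rw [abs_div, abs_of_pos ht, div_le_iff₀ ht]
  have := hK.dist_le_mul (x + t) x
  simpa [Real.dist_eq, abs_of_pos ht] using this

theorem lip_ftc {K : NNReal} {h : ℝ → ℝ} (hK : LipschitzWith K h) {a b : ℝ} (hab : a ≤ b) :
    ∫ x in a..b, deriv h x = h b - h a := by
  have hc : Continuous h := hK.continuous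
  set t : ℕ → ℝ := fun n => 1 / (n + 1) with ht_def
  have ht : ∀ n, 0 < t n := fun n => by positivity
  have htend : Tendsto t atTop (𝓝 0) := tendsto_one_div_add_atTop_nhds_zero_nat
  set q : ℕ → ℝ → ℝ := fun n x => (h (x + t n) - h x) / t n with hq_def
  -- sequences approaching x from the right
  have hseq : ∀ x : ℝ, Tendsto (fun n => x + t n) atTop (𝓝[≠] x) := by
    intro x
    rw [tendsto_nhdsWithin_iff]
    constructor
    · simpa using tendsto_const_nhds.add htend
    · exact Filter.Eventually.of_forall fun n => by simp [ne_of_gt (ht n)]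
  have hslope : ∀ {f : ℝ → ℝ} {x d : ℝ}, HasDerivAt f d x →
      Tendsto (fun n => (f (x + t n) - f x) / t n) atTop (𝓝 d) := by
    intro f x d hd
    rw [hasDerivAt_iff_tendsto_slope] at hd
    have := hd.comp (hseq x)
    convert this using 2 with n
    simp [slope, Function.comp, div_eq_inv_mul]
  -- a.e. convergence
  have hlim : ∀ᵐ x ∂(volume.restrict (Set.Ioc a b)),
      Tendsto (fun n => q n x) atTop (𝓝 (deriv h x)) := by
    filter_upwards [ae_restrict_of_ae hK.ae_differentiableAt] with x hx
    exact hslope hx.hasDerivAt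
  have hDCT : Tendsto (fun n => ∫ x in Set.Ioc a b, q n x) atTop
      (𝓝 (∫ x in Set.Ioc a b, deriv h x)) := by
    refine MeasureTheory.tendsto_integral_of_dominated_convergence (fun _ => (K : ℝ))
      (fun n => ?_) ?_ (fun n => Filter.Eventually.of_forall fun x => ?_) hlim
    · exact (((hc.comp (continuous_id.add continuous_const)).sub hc).div_const _).aestronglyMeasurable
    · exact integrable_const _
    · simpa [q, abs_div] using lip_slope_bound hK (x := x) (ht n)
  -- identify the integrals of q n
  set F : ℝ → ℝ := fun u => ∫ x in a..u, h x with hF_def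
  have hF : ∀ u : ℝ, HasDerivAt F (h u) u := fun u =>
    intervalIntegral.integral_hasDerivAt_right (hc.intervalIntegrable a u)
      (hc.stronglyMeasurable.stronglyMeasurableAtFilter) hc.continuousAt
  have key : ∀ n, ∫ x in Set.Ioc a b, q n x
      = (F (b + t n) - F b) / t n - (F (a + t n) - F a) / t n := by
    intro n
    rw [← intervalIntegral.integral_of_le hab]
    have h1 : IntervalIntegrable (fun x => h (x + t n)) volume a b :=
      (hc.comp (continuous_id.add continuous_const)).intervalIntegrable a b
    have h2 : IntervalIntegrable h volume a b := hc.intervalIntegrable a b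
    have : (∫ x in a..b, q n x) = ((∫ x in a..b, h (x + t n)) - ∫ x in a..b, h x) / t n := by
      rw [← intervalIntegral.integral_sub h1 h2, ← intervalIntegral.integral_div]
    rw [this, intervalIntegral.integral_comp_add_right]
    have e1 : (∫ x in a + t n..b + t n, h x) = F (b + t n) - F (a + t n) := by
      have i1 : IntervalIntegrable h volume a (a + t n) := hc.intervalIntegrable _ _
      have i2 : IntervalIntegrable h volume (a + t n) (b + t n) := hc.intervalIntegrable _ _
      have := intervalIntegral.integral_add_adjacent_intervals i1 i2
      simp only [hF_def]
      linarith [this]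
    have hFa : F a = 0 := intervalIntegral.integral_same
    rw [e1]
    simp only [hFa]
    ring
  have hlim2 : Tendsto (fun n => ∫ x in Set.Ioc a b, q n x) atTop (𝓝 (h b - h a)) := by
    simp only [key]
    exact (hslope (hF b)).sub (hslope (hF a))
  have := tendsto_nhds_unique hDCT hlim2
  rw [intervalIntegral.integral_of_le hab, this]

theorem abs_log_sub_log_le {m p q : ℝ} (hm : 0 < m) (hp : m ≤ p) (hq : m ≤ q) :
    |Real.log p - Real.log q| ≤ |p - q| / m := by
  wlog h : q ≤ p generalizing p q
  · rw [abs_sub_comm, abs_sub_comm p q]; exact this hq hp (le_of_not_ge h)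
  have hq0 : 0 < q := lt_of_lt_of_le hm hq
  have hp0 : 0 < p := lt_of_lt_of_le hm hp
  have hlog : Real.log q ≤ Real.log p := Real.log_le_log hq0 h
  rw [abs_of_nonneg (sub_nonneg.2 hlog), abs_of_nonneg (sub_nonneg.2 h),
    ← Real.log_div hp0.ne' hq0.ne']
  calc Real.log (p / q) ≤ p / q - 1 := Real.log_le_sub_one_of_pos (by positivity)
    _ = (p - q) / q := by field_simp
    _ ≤ (p - q) / m := by gcongr

theorem lip_deriv_bound {K : NNReal} {h : ℝ → ℝ} (hK : LipschitzWith K h) (x : ℝ) :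
    |deriv h x| ≤ K := by
  by_cases hd : DifferentiableAt ℝ h x
  · have h1 : ‖fderiv ℝ h x‖ ≤ K := norm_fderiv_le_of_lipschitz ℝ hK
    have h2 : fderiv ℝ h x 1 = deriv h x := by
      rfl
    rw [← h2]
    calc |fderiv ℝ h x 1| ≤ ‖fderiv ℝ h x‖ * ‖(1 : ℝ)‖ := (fderiv ℝ h x).le_opNorm 1
      _ ≤ K := by simpa using h1
  · rw [deriv_zero_of_not_differentiableAt hd]
    simpa using K.coe_nonneg

theorem sqrt43_le : Real.sqrt (4/3) ≤ 4/3 := by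
  have hss := Real.sq_sqrt (show (0:ℝ) ≤ 4/3 by norm_num)
  nlinarith [Real.sqrt_nonneg ((4:ℝ)/3)]

theorem ae_ne_real (c : ℝ) : ∀ᵐ l : ℝ ∂volume, l ≠ c := by
  have h : {l : ℝ | ¬ l ≠ c} = {c} := by ext; simp
  rw [MeasureTheory.ae_iff, h]
  exact measure_singleton c

theorem log_ftc (S : ℝ → ℝ)
    (hSpos : ∀ l, 0 ≤ l → 0 < S l)
    (hSlip : ∀ x y : ℝ, 0 ≤ x → ∃ C : NNReal, LipschitzOnWith C S (Set.Icc x y))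
    {a b : ℝ} (ha : 0 ≤ a) (hab : a ≤ b) :
    IntervalIntegrable (fun l => deriv S l / S l) volume a b ∧
      (∫ l in a..b, deriv S l / S l) = Real.log (S b) - Real.log (S a) := by
  obtain ⟨C, hC⟩ := hSlip a b ha
  have hcont : ContinuousOn S (Set.Icc a b) := hC.continuousOn
  obtain ⟨z, hz, hzmin⟩ := isCompact_Icc.exists_isMinOn (Set.nonempty_Icc.2 hab) hcont
  set m := S z with hm_def
  have hm : 0 < m := hSpos z (le_trans ha hz.1)
  have hSm : ∀ l ∈ Set.Icc a b, m ≤ S l := fun l hl => hzmin hl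
  -- the log of S is Lipschitz on [a, b]
  set K : NNReal := C / ⟨m, hm.le⟩ with hK_def
  have hKcoe : (K : ℝ) = C / m := by rw [hK_def]; exact NNReal.coe_div C ⟨m, hm.le⟩
  have hloglip : LipschitzOnWith K (fun l => Real.log (S l)) (Set.Icc a b) := by
    rw [lipschitzOnWith_iff_dist_le_mul]
    intro x hx y hy
    rw [Real.dist_eq, Real.dist_eq, hKcoe]
    calc |Real.log (S x) - Real.log (S y)| ≤ |S x - S y| / m :=
          abs_log_sub_log_le hm (hSm x hx) (hSm y hy)
      _ ≤ (C * |x - y|) / m := by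
          gcongr
          have := hC.dist_le_mul x hx y hy
          simpa [Real.dist_eq] using this
      _ = C / m * |x - y| := by ring
  obtain ⟨g, hglip, hgeq⟩ := hloglip.extend_real
  -- extend S itself to get a.e. differentiability
  obtain ⟨S', hS'lip, hS'eq⟩ := hC.extend_real
  -- a.e. equality of deriv g with deriv S / S on the open interval
  have hae_eq : ∀ᵐ x ∂volume, x ∈ Set.Ioo a b → deriv g x = deriv S x / S x := by
    filter_upwards [hS'lip.ae_differentiableAt] with x hx hmem
    have hnb : Set.Ioo a b ∈ 𝓝 x := Ioo_mem_nhds hmem.1 hmem.2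
    have hSeq : S' =ᶠ[𝓝 x] S := by
      filter_upwards [hnb] with y hy
      exact (hS'eq (Set.Ioo_subset_Icc_self hy)).symm
    have hdS : DifferentiableAt ℝ S x := hx.congr_of_eventuallyEq hSeq.symm
    have hSx : 0 < S x := hSpos x (le_trans ha hmem.1.le)
    have hld : HasDerivAt (fun y => Real.log (S y)) (deriv S x / S x) x :=
      (hdS.hasDerivAt).log hSx.ne'
    have hgeq' : g =ᶠ[𝓝 x] fun y => Real.log (S y) := by
      filter_upwards [hnb] with y hy
      exact (hgeq (Set.Ioo_subset_Icc_self hy)).symm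
    have : HasDerivAt g (deriv S x / S x) x := hld.congr_of_eventuallyEq hgeq'
    exact this.deriv
  have hne_b : ∀ᵐ x ∂volume, x ≠ b := ae_ne_real b
  have hne_a : ∀ᵐ x ∂volume, x ≠ a := ae_ne_real a
  have hae_eq' : ∀ᵐ x ∂volume, x ∈ Set.Ioc a b → deriv g x = deriv S x / S x := by
    filter_upwards [hae_eq, hne_b] with x hx hxb hmem
    exact hx ⟨hmem.1, lt_of_le_of_ne hmem.2 hxb⟩
  -- integrability
  have hgint : IntervalIntegrable (deriv g) volume a b := by
    rw [intervalIntegrable_iff_integrableOn_Ioc_of_le hab]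
    apply Measure.integrableOn_of_bounded (M := (K : ℝ)) measure_Ioc_lt_top.ne
      (measurable_deriv g).aestronglyMeasurable
    exact Filter.Eventually.of_forall fun x => by
      simpa [Real.norm_eq_abs] using lip_deriv_bound hglip x
  have hφint : IntervalIntegrable (fun l => deriv S l / S l) volume a b := by
    rw [intervalIntegrable_iff_integrableOn_Ioc_of_le hab] at hgint ⊢
    apply hgint.congr
    rw [Filter.EventuallyEq, ae_restrict_iff' measurableSet_Ioc]
    exact hae_eq'
  refine ⟨hφint, ?_⟩
  have h1 : (∫ l in a..b, deriv S l / S l) = ∫ l in a..b, deriv g l := by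
    apply intervalIntegral.integral_congr_ae
    rw [Set.uIoc_of_le hab]
    filter_upwards [hae_eq'] with x hx hmem
    exact (hx hmem).symm
  rw [h1, lip_ftc hglip hab, ← hgeq (Set.right_mem_Icc.2 hab), ← hgeq (Set.left_mem_Icc.2 hab)]

theorem exp_int2 (c β : ℝ) (hβ : β ≠ 0) (a b : ℝ) :
    ∫ l in a..b, c * Real.exp (-(β * l)) =
      c / β * (Real.exp (-(β * a)) - Real.exp (-(β * b))) := by
  have h : ∀ l : ℝ, HasDerivAt (fun l => -(c / β) * Real.exp (-(β * l)))
      (c * Real.exp (-(β * l))) l := by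
    intro l
    have h1 : HasDerivAt (fun l : ℝ => -(β * l)) (-β) l := by
      have h0 := ((hasDerivAt_id l).const_mul β).neg; rw [mul_one] at h0; exact h0
    have h2 := (h1.exp).const_mul (-(c / β))
    refine h2.congr_deriv ?_
    field_simp
  rw [intervalIntegral.integral_eq_sub_of_hasDerivAt (fun l _ => h l)
    (Continuous.intervalIntegrable (by fun_prop) a b)]
  ring

theorem exp_int3 (c k2 : ℝ) (hk2 : k2 ≠ 0) (a b : ℝ) :
    ∫ l in a..b, c * k2 * Real.exp (-(k2 * l) / 3) =
      3 * c * (Real.exp (-(k2 * a) / 3) - Real.exp (-(k2 * b) / 3)) := by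
  have he : ∀ x : ℝ, -(k2 * x) / 3 = -((k2 / 3) * x) := fun x => by ring
  have h1 : (fun l => c * k2 * Real.exp (-(k2 * l) / 3))
      = fun l => (c * k2) * Real.exp (-((k2 / 3) * l)) := by
    funext l; rw [he]
  rw [h1, exp_int2 _ _ (by simpa using hk2), he a, he b]
  field_simp

theorem numeric_aux {u x : ℝ} (hu : 4 / 3 ≤ u) (hx : 0 ≤ x) :
    Real.log (3 / 4) <
      (u - 4 / 3) * Real.log (3 * u) + 10 / 9 * x + u * Real.exp (-x) - u := by
  have hu0 : 0 < u := by linarith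
  have h1 : Real.log (9 * u / 10) - x + 1 ≤ 9 * u / 10 * Real.exp (-x) := by
    have h := Real.add_one_le_exp (Real.log (9 * u / 10) - x)
    rw [Real.exp_sub, Real.exp_log (by positivity), div_eq_mul_inv] at h
    rw [Real.exp_neg]
    calc Real.log (9 * u / 10) - x + 1 = Real.log (9 * u * 10⁻¹) - x + 1 := by ring_nf
      _ ≤ 9 * u * 10⁻¹ * (Real.exp x)⁻¹ := h
      _ = 9 * u / 10 * (Real.exp x)⁻¹ := by ring
  have h2 : 10 / 9 * (Real.log (9 * u / 10) - x + 1) ≤ u * Real.exp (-x) := by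
    have h2a := mul_le_mul_of_nonneg_left h1 (by norm_num : (0:ℝ) ≤ 10 / 9)
    have h2b : (10:ℝ) / 9 * (9 * u / 10 * Real.exp (-x)) = u * Real.exp (-x) := by ring
    linarith
  have h3 : Real.log 4 ≤ Real.log (3 * u) := Real.log_le_log (by norm_num) (by linarith)
  have h4 : Real.log (6 / 5) ≤ Real.log (9 * u / 10) :=
    Real.log_le_log (by norm_num) (by linarith)
  have h5 : 1 / 6 ≤ Real.log (6 / 5) := by
    have := Real.one_sub_inv_le_log_of_pos (show (0:ℝ) < 6 / 5 by norm_num)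
    norm_num at this
    linarith
  have h6 : 1 / 4 ≤ Real.log (4 / 3) := by
    have := Real.one_sub_inv_le_log_of_pos (show (0:ℝ) < 4 / 3 by norm_num)
    norm_num at this
    linarith
  have h7 : 1 ≤ Real.log 4 := by
    have h4e : (4:ℝ) = 2 ^ 2 := by norm_num
    rw [h4e, Real.log_pow]
    push_cast
    linarith [Real.log_two_gt_d9]
  have h8 : Real.log (3 / 4) = -Real.log (4 / 3) := by
    rw [← Real.log_inv]; norm_num
  have h9 : (u - 4 / 3) * Real.log 4 ≤ (u - 4 / 3) * Real.log (3 * u) :=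
    mul_le_mul_of_nonneg_left h3 (by linarith)
  have h10 : 0 ≤ (u - 4 / 3) * (Real.log 4 - 1) := mul_nonneg (by linarith) (by linarith)
  nlinarith [h2, h9, h10, h4, h5, h6]

set_option maxHeartbeats 2000000 in
/-- Analytic core of Theorem 5.2 for spherical orbits: if the minimal orbit area
`S : [0,∞) → (0,∞)` is locally Lipschitz, a.e. satisfies
`|S'/S − (2/3)k²| ≤ 8π/S + 2(1+C₁)k √(8π/S) + k² C₄ e^{−k²λ/3}`, and starts above
the threshold `S_lower = Ŝ (9C₄)^{3C₄ − 4/3}` with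
`Ŝ = (8π/k²)(√((1+C₁)² + 2/9) − (1+C₁))⁻²`, then eventually `S` grows like
`e^{(2/3)k²λ}` up to a factor 2. -/
theorem minimal_area_growth_sphere
    (k C₁ C₄ : ℝ) (hk : 0 < k) (hC₁ : 0 ≤ C₁) (hC₄ : 4/9 ≤ C₄)
    (Shat Slower : ℝ)
    (hShat : Shat = (8 * Real.pi / k^2) /
      (Real.sqrt ((1 + C₁)^2 + 2/9) - (1 + C₁))^2)
    (hSlower : Slower = Shat * (9 * C₄) ^ (3 * C₄ - 4/3 : ℝ))
    (S : ℝ → ℝ)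
    (hSpos : ∀ l, 0 ≤ l → 0 < S l)
    (hSlip : ∀ x y : ℝ, 0 ≤ x → ∃ C : NNReal, LipschitzOnWith C S (Set.Icc x y))
    (hae : ∀ᵐ l ∂(volume.restrict (Set.Ici (0 : ℝ))),
      DifferentiableAt ℝ S l ∧
        |deriv S l / S l - (2/3) * k^2| ≤
          8 * Real.pi / S l + 2 * (1 + C₁) * k * Real.sqrt (8 * Real.pi / S l)
            + k^2 * C₄ * Real.exp (-(k^2 * l) / 3))
    (h0 : Slower ≤ S 0) :
    ∃ l₀ : ℝ, 0 ≤ l₀ ∧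
      ∀ l₁ l₂ : ℝ, l₀ ≤ l₁ → l₁ < l₂ →
        1/2 ≤ S l₂ / (S l₁ * Real.exp ((2/3) * k^2 * (l₂ - l₁))) ∧
        S l₂ / (S l₁ * Real.exp ((2/3) * k^2 * (l₂ - l₁))) ≤ 2 := by
  have hπ : 0 < Real.pi := Real.pi_pos
  have hk2 : 0 < k^2 := by positivity
  have hC₄0 : 0 < C₄ := by linarith
  obtain ⟨bb, hbb_def⟩ : ∃ bb : ℝ, bb = 1 + C₁ := ⟨_, rfl⟩
  rw [← hbb_def] at hShat hae
  have hbb1 : 1 ≤ bb := by rw [hbb_def]; linarith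
  have hbb0 : 0 < bb := by linarith
  obtain ⟨s0, hs0_def⟩ : ∃ s0 : ℝ, s0 = Real.sqrt (bb^2 + 2/9) := ⟨_, rfl⟩
  rw [← hs0_def] at hShat
  have hs0sq : s0^2 = bb^2 + 2/9 := by rw [hs0_def]; exact Real.sq_sqrt (by positivity)
  obtain ⟨ρ, hρ_def⟩ : ∃ ρ : ℝ, ρ = s0 - bb := ⟨_, rfl⟩
  rw [← hρ_def] at hShat
  have hρ : 0 < ρ := by
    have h1 : Real.sqrt (bb^2) < s0 := by
      rw [hs0_def]; exact Real.sqrt_lt_sqrt (by positivity) (by linarith)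
    rw [Real.sqrt_sq hbb0.le] at h1
    rw [hρ_def]; linarith
  have hShatpos : 0 < Shat := by rw [hShat]; positivity
  have hid : 8 * Real.pi / Shat = k^2 * ρ^2 := by rw [hShat]; field_simp
  have hkey : k^2 * ρ^2 + 2 * bb * k * (k * ρ) = 2/9 * k^2 := by
    have h9 : ρ^2 + 2 * bb * ρ = 2/9 := by rw [hρ_def]; linear_combination hs0sq
    linear_combination k^2 * h9
  -- bound on the first two error terms when S is above 3/4 of Shat
  have hφbound : ∀ l : ℝ, 3/4 * Shat ≤ S l →
      8 * Real.pi / S l + 2 * bb * k * Real.sqrt (8 * Real.pi / S l) ≤ 8/27 * k^2 := by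
    intro l hl
    have hSlpos : 0 < S l := lt_of_lt_of_le (by positivity) hl
    have h1 : 8 * Real.pi / S l ≤ 4/3 * (k^2 * ρ^2) := by
      rw [← hid]
      calc 8 * Real.pi / S l ≤ 8 * Real.pi / (3/4 * Shat) := by gcongr
        _ = 4/3 * (8 * Real.pi / Shat) := by field_simp
    have h2 : Real.sqrt (8 * Real.pi / S l) ≤ 4/3 * (k * ρ) := by
      calc Real.sqrt (8 * Real.pi / S l) ≤ Real.sqrt (4/3 * (k^2 * ρ^2)) :=
            Real.sqrt_le_sqrt h1
        _ = Real.sqrt (4/3) * (k * ρ) := by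
            rw [show k^2 * ρ^2 = (k * ρ)^2 by ring, Real.sqrt_mul (by norm_num),
              Real.sqrt_sq (by positivity)]
        _ ≤ 4/3 * (k * ρ) := by
            exact mul_le_mul_of_nonneg_right sqrt43_le (by positivity)
    calc 8 * Real.pi / S l + 2 * bb * k * Real.sqrt (8 * Real.pi / S l)
        ≤ 4/3 * (k^2 * ρ^2) + 2 * bb * k * (4/3 * (k * ρ)) := by
          refine add_le_add h1 (mul_le_mul_of_nonneg_left h2 (by positivity))
      _ = 4/3 * (k^2 * ρ^2 + 2 * bb * k * (k * ρ)) := by ring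
      _ = 4/3 * (2/9 * k^2) := by rw [hkey]
      _ = 8/27 * k^2 := by ring
  -- continuity of S on [0, ∞)
  have hcontS : ContinuousOn S (Set.Ici 0) := by
    intro l hl
    have hl0 : (0:ℝ) ≤ l := hl
    obtain ⟨C, hC⟩ := hSlip 0 (l+1) le_rfl
    have h1 : ContinuousWithinAt S (Set.Icc 0 (l+1)) l :=
      hC.continuousOn l ⟨hl0, by linarith⟩
    apply h1.mono_of_mem_nhdsWithin
    have h2 : Set.Iio (l+1) ∈ 𝓝[Set.Ici 0] l :=
      mem_nhdsWithin_of_mem_nhds (Iio_mem_nhds (by linarith))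
    refine Filter.mem_of_superset (Filter.inter_mem h2 self_mem_nhdsWithin) ?_
    rintro y ⟨hy1, hy2⟩
    exact ⟨hy2, le_of_lt hy1⟩
  have hSlowerpos : 0 < Slower := by
    rw [hSlower]
    positivity
  have hShatS0 : Shat ≤ S 0 := by
    have h1 : (1:ℝ) ≤ (9*C₄) ^ (3*C₄ - 4/3 : ℝ) :=
      Real.one_le_rpow (by linarith) (by linarith)
    calc Shat = Shat * 1 := (mul_one _).symm
      _ ≤ Shat * (9*C₄) ^ (3*C₄ - 4/3 : ℝ) := by
          exact mul_le_mul_of_nonneg_left h1 hShatpos.le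
      _ = Slower := hSlower.symm
      _ ≤ S 0 := h0
  -- fundamental lower bound via FTC, valid whenever S ≥ 3/4 Shat on (0, t)
  have hFTClower : ∀ t : ℝ, 0 ≤ t → (∀ l, 0 < l → l < t → 3/4 * Shat ≤ S l) →
      10/27 * k^2 * t - 3 * C₄ * (1 - Real.exp (-(k^2 * t) / 3)) ≤
        Real.log (S t) - Real.log (S 0) := by
    intro t ht hSlow
    obtain ⟨hint, hftc⟩ := log_ftc S hSpos hSlip le_rfl ht
    have haeIcc : ∀ᵐ l ∂(volume.restrict (Set.Icc (0:ℝ) t)),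
        10/27 * k^2 - C₄ * k^2 * Real.exp (-(k^2 * l) / 3) ≤ deriv S l / S l := by
      have h1 := ae_restrict_of_ae_restrict_of_subset
        (Set.Icc_subset_Ici_self : Set.Icc (0:ℝ) t ⊆ Set.Ici 0) hae
      filter_upwards [h1, ae_restrict_of_ae (ae_ne_real 0),
        ae_restrict_of_ae (ae_ne_real t), ae_restrict_mem measurableSet_Icc]
        with l hl h0' ht' hlmem
      obtain ⟨hdiff, hineq⟩ := hl
      have hl0 : 0 < l := lt_of_le_of_ne hlmem.1 (Ne.symm h0')
      have hlt : l < t := lt_of_le_of_ne hlmem.2 ht'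
      have hSl := hφbound l (hSlow l hl0 hlt)
      have habs := abs_le.1 hineq
      linarith only [habs.1, hSl]
    have hcompint : IntervalIntegrable
        (fun l => 10/27 * k^2 - C₄ * k^2 * Real.exp (-(k^2 * l) / 3)) volume 0 t :=
      Continuous.intervalIntegrable (by fun_prop) 0 t
    have hIneq := intervalIntegral.integral_mono_ae_restrict ht hcompint hint haeIcc
    have hsplit : (∫ l in (0:ℝ)..t, (10/27 * k^2 - C₄ * k^2 * Real.exp (-(k^2 * l) / 3)))
        = 10/27 * k^2 * t - 3 * C₄ * (1 - Real.exp (-(k^2 * t) / 3)) := by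
      rw [intervalIntegral.integral_sub (Continuous.intervalIntegrable (by fun_prop) 0 t)
        (Continuous.intervalIntegrable (by fun_prop) 0 t),
        intervalIntegral.integral_const, exp_int3 C₄ (k^2) hk2.ne']
      simp [smul_eq_mul]
      ring
    rw [hsplit] at hIneq
    linarith only [hftc ▸ hIneq]
  -- the barrier: S stays above 3/4 Shat
  have hbarrier : ∀ l, 0 ≤ l → 3/4 * Shat ≤ S l := by
    by_contra hcon
    push_neg at hcon
    obtain ⟨l₀, hl₀0, hl₀⟩ := hcon
    set B := {l : ℝ | 0 ≤ l ∧ S l < 3/4 * Shat} with hB_def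
    have hBne : B.Nonempty := ⟨l₀, hl₀0, hl₀⟩
    have hBbdd : BddBelow B := ⟨0, fun x hx => hx.1⟩
    set t := sInf B with ht_def
    have htmem_cl : t ∈ closure B := csInf_mem_closure hBne hBbdd
    have ht0 : 0 ≤ t := le_csInf hBne fun x hx => hx.1
    have hSt : S t ≤ 3/4 * Shat := by
      obtain ⟨u, hu, hul⟩ := mem_closure_iff_seq_limit.1 htmem_cl
      have htend : Filter.Tendsto (fun n => S (u n)) Filter.atTop (𝓝 (S t)) := by
        have h2 : Filter.Tendsto u Filter.atTop (𝓝[Set.Ici 0] t) :=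
          tendsto_nhdsWithin_of_tendsto_nhds_of_eventually_within u hul
            (Filter.Eventually.of_forall fun n => (hu n).1)
        exact ((hcontS t ht0).tendsto).comp h2
      exact le_of_tendsto htend (Filter.Eventually.of_forall fun n => (hu n).2.le)
    have hlow : ∀ l, 0 < l → l < t → 3/4 * Shat ≤ S l := by
      intro l hl hlt
      by_contra h
      push_neg at h
      exact absurd (csInf_le hBbdd ⟨hl.le, h⟩) (not_le.2 hlt)
    have hmain := hFTClower t ht0 hlow
    -- lower bound for log S 0
    have hlog0 : Real.log Shat + (3*C₄ - 4/3) * Real.log (9*C₄) ≤ Real.log (S 0) := by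
      have h1 : Real.log Slower = Real.log Shat + (3*C₄ - 4/3) * Real.log (9*C₄) := by
        rw [hSlower, Real.log_mul hShatpos.ne' (by positivity),
          Real.log_rpow (by linarith)]
      rw [← h1]
      exact Real.log_le_log hSlowerpos h0
    -- the numeric inequality
    have hnum := numeric_aux (u := 3*C₄) (x := k^2 * t / 3) (by linarith) (by positivity)
    -- combine into a contradiction with hSt
    have hSt' : Real.log (S t) ≤ Real.log (3/4 * Shat) :=
      Real.log_le_log (hSpos t ht0) hSt
    have hlog34 : Real.log (3/4 * Shat) = Real.log (3/4) + Real.log Shat :=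
      Real.log_mul (by norm_num) hShatpos.ne'
    have hexpand : Real.exp (-(k^2 * t) / 3) = Real.exp (-(k^2 * t / 3)) := by
      congr 1; ring
    rw [hexpand] at hmain
    have h3u : (3:ℝ) * (3 * C₄) = 9 * C₄ := by ring
    rw [h3u] at hnum
    have h10 : 10/27 * k^2 * t = 10/9 * (k^2 * t / 3) := by ring
    linarith only [hmain, hlog0, hnum, hSt', hlog34, h10]
  -- exponential growth from below
  obtain ⟨m, hm_def⟩ : ∃ m : ℝ, m = 3/4 * Shat * Real.exp (-(3 * C₄)) := ⟨_, rfl⟩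
  have hm : 0 < m := by rw [hm_def]; positivity
  have hgrow : ∀ l, 0 ≤ l → m * Real.exp (10/27 * k^2 * l) ≤ S l := by
    intro l hl
    have hmain := hFTClower l hl (fun x hx hxl => hbarrier x hx.le)
    have hlog1 : Real.log Shat ≤ Real.log (S 0) := by
      calc Real.log Shat ≤ Real.log Slower := by
            rw [hSlower]
            apply Real.log_le_log hShatpos
            calc Shat = Shat * 1 := (mul_one _).symm
              _ ≤ Shat * (9*C₄) ^ (3*C₄ - 4/3 : ℝ) := by
                  exact mul_le_mul_of_nonneg_left
                    (Real.one_le_rpow (by linarith) (by linarith)) hShatpos.le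
        _ ≤ Real.log (S 0) := Real.log_le_log hSlowerpos h0
    have hlogm : Real.log (m * Real.exp (10/27 * k^2 * l))
        = Real.log (3/4) + Real.log Shat + (-(3 * C₄)) + 10/27 * k^2 * l := by
      rw [hm_def,
        Real.log_mul (mul_ne_zero (mul_ne_zero (by norm_num) hShatpos.ne')
          (Real.exp_pos _).ne') (Real.exp_pos _).ne',
        Real.log_mul (mul_ne_zero (by norm_num) hShatpos.ne') (Real.exp_pos _).ne',
        Real.log_mul (by norm_num : (3/4:ℝ) ≠ 0) hShatpos.ne', Real.log_exp, Real.log_exp]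
    have hloggoal : Real.log (m * Real.exp (10/27 * k^2 * l)) ≤ Real.log (S l) := by
      rw [hlogm]
      have hexp1 : Real.exp (-(k^2 * l) / 3) ≤ 1 := by
        rw [show (1:ℝ) = Real.exp 0 from Real.exp_zero.symm]
        apply Real.exp_le_exp.2
        have : 0 ≤ k^2 * l := by positivity
        linarith
      have hlog34 : Real.log (3/4 : ℝ) ≤ 0 := by
        apply Real.log_nonpos <;> norm_num
      linarith only [hmain, hlog1, hlog34, hexp1,
        mul_nonneg hC₄0.le (Real.exp_pos (-(k^2 * l) / 3)).le]
    have := Real.exp_le_exp.2 hloggoal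
    rwa [Real.exp_log (by positivity), Real.exp_log (hSpos l hl)] at this
  -- the decay bound for the full error term
  obtain ⟨β, hβ_def⟩ : ∃ β : ℝ, β = 5/27 * k^2 := ⟨_, rfl⟩
  have hβ : 0 < β := by rw [hβ_def]; positivity
  obtain ⟨D, hD_def⟩ : ∃ D : ℝ,
      D = 8 * Real.pi / m + 2 * bb * k * Real.sqrt (8 * Real.pi / m) + C₄ * k^2 := ⟨_, rfl⟩
  have hD : 0 < D := by
    rw [hD_def]
    have h1 : 0 < 8 * Real.pi / m := by positivity
    have h2 : 0 ≤ 2 * bb * k * Real.sqrt (8 * Real.pi / m) := by positivity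
    linarith only [h1, h2, mul_pos hC₄0 hk2]
  have hεbound : ∀ l, 0 ≤ l →
      8 * Real.pi / S l + 2 * bb * k * Real.sqrt (8 * Real.pi / S l)
        + C₄ * k^2 * Real.exp (-(k^2 * l) / 3) ≤ D * Real.exp (-(β * l)) := by
    intro l hl
    have hSl := hgrow l hl
    have hSlpos := hSpos l hl
    have hmexp : 0 < m * Real.exp (10/27 * k^2 * l) := by positivity
    have h1 : 8 * Real.pi / S l ≤ 8 * Real.pi / m * Real.exp (-(10/27 * k^2 * l)) := by
      rw [Real.exp_neg]
      have e1 : 8 * Real.pi / m * (Real.exp (10/27 * k^2 * l))⁻¹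
          = 8 * Real.pi / (m * Real.exp (10/27 * k^2 * l)) := by
        rw [← div_eq_mul_inv, div_div]
      rw [e1]
      gcongr
    have h1' : 8 * Real.pi / S l ≤ 8 * Real.pi / m * Real.exp (-(β * l)) := by
      apply h1.trans
      apply mul_le_mul_of_nonneg_left _ (by positivity)
      apply Real.exp_le_exp.2
      rw [hβ_def]
      have hkl : 0 ≤ k^2 * l := mul_nonneg hk2.le hl
      linarith only [hkl]
    have h2 : Real.sqrt (8 * Real.pi / S l)
        ≤ Real.sqrt (8 * Real.pi / m) * Real.exp (-(β * l)) := by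
      calc Real.sqrt (8 * Real.pi / S l)
          ≤ Real.sqrt (8 * Real.pi / m * Real.exp (-(10/27 * k^2 * l))) :=
            Real.sqrt_le_sqrt h1
        _ = Real.sqrt (8 * Real.pi / m) * Real.sqrt (Real.exp (-(10/27 * k^2 * l))) :=
            Real.sqrt_mul (by positivity) _
        _ = Real.sqrt (8 * Real.pi / m) * Real.exp (-(10/27 * k^2 * l) / 2) := by
            rw [← Real.exp_half]
        _ = Real.sqrt (8 * Real.pi / m) * Real.exp (-(β * l)) := by
            congr 1
            rw [hβ_def]
            ring_nf
    have h3 : C₄ * k^2 * Real.exp (-(k^2 * l) / 3) ≤ C₄ * k^2 * Real.exp (-(β * l)) := by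
      apply mul_le_mul_of_nonneg_left _ (by positivity)
      apply Real.exp_le_exp.2
      rw [hβ_def]
      have hkl : 0 ≤ k^2 * l := mul_nonneg hk2.le hl
      linarith only [hkl]
    calc 8 * Real.pi / S l + 2 * bb * k * Real.sqrt (8 * Real.pi / S l)
          + C₄ * k^2 * Real.exp (-(k^2 * l) / 3)
        ≤ 8 * Real.pi / m * Real.exp (-(β * l))
          + 2 * bb * k * (Real.sqrt (8 * Real.pi / m) * Real.exp (-(β * l)))
          + C₄ * k^2 * Real.exp (-(β * l)) := by
          refine add_le_add (add_le_add h1' (mul_le_mul_of_nonneg_left h2 (by positivity))) h3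
      _ = D * Real.exp (-(β * l)) := by rw [hD_def]; ring
  -- choose the threshold time
  obtain ⟨L2, hL2_def⟩ : ∃ L2 : ℝ, L2 = Real.log 2 := ⟨_, rfl⟩
  have hL2 : 0 < L2 := by rw [hL2_def]; exact Real.log_pos one_lt_two
  obtain ⟨lam, hlam_def⟩ : ∃ lam : ℝ, lam = max 0 (Real.log (D / (β * L2)) / β) := ⟨_, rfl⟩
  have hlam0 : 0 ≤ lam := by rw [hlam_def]; exact le_max_left _ _
  have htail : D / β * Real.exp (-(β * lam)) ≤ L2 := by
    have h1 : Real.log (D / (β * L2)) ≤ β * lam := by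
      have h2 : Real.log (D / (β * L2)) / β ≤ lam := by
        rw [hlam_def]; exact le_max_right _ _
      calc Real.log (D / (β * L2)) = β * (Real.log (D / (β * L2)) / β) := by
            field_simp
        _ ≤ β * lam := mul_le_mul_of_nonneg_left h2 hβ.le
    have h2 : Real.exp (-(β * lam)) ≤ Real.exp (-(Real.log (D / (β * L2)))) :=
      Real.exp_le_exp.2 (by linarith)
    have h3 : Real.exp (-(Real.log (D / (β * L2)))) = β * L2 / D := by
      rw [Real.exp_neg, Real.exp_log (by positivity), inv_div]
    calc D / β * Real.exp (-(β * lam)) ≤ D / β * (β * L2 / D) := by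
          apply mul_le_mul_of_nonneg_left _ (by positivity)
          rw [← h3]; exact h2
      _ = L2 := by field_simp
  refine ⟨lam, hlam0, fun l₁ l₂ hl1 hl2 => ?_⟩
  have hl₁0 : 0 ≤ l₁ := le_trans hlam0 hl1
  have hl₂0 : 0 ≤ l₂ := le_trans hl₁0 hl2.le
  obtain ⟨hint, hftc⟩ := log_ftc S hSpos hSlip hl₁0 hl2.le
  -- two-sided a.e. bounds
  have haeI : ∀ᵐ l ∂(volume.restrict (Set.Icc l₁ l₂)),
      2/3 * k^2 - D * Real.exp (-(β * l)) ≤ deriv S l / S l ∧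
        deriv S l / S l ≤ 2/3 * k^2 + D * Real.exp (-(β * l)) := by
    have hsub : Set.Icc l₁ l₂ ⊆ Set.Ici (0:ℝ) := fun x hx => le_trans hl₁0 hx.1
    filter_upwards [ae_restrict_of_ae_restrict_of_subset hsub hae,
      ae_restrict_mem measurableSet_Icc] with l hl hmem
    obtain ⟨hdiff, hineq⟩ := hl
    have hl0 : 0 ≤ l := le_trans hl₁0 hmem.1
    have hb := hεbound l hl0
    have habs := abs_le.1 hineq
    constructor <;> linarith only [habs.1, habs.2, hb]
  have hupint : IntervalIntegrable (fun l => 2/3 * k^2 + D * Real.exp (-(β * l))) volume l₁ l₂ :=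
    Continuous.intervalIntegrable (by fun_prop) l₁ l₂
  have hloint : IntervalIntegrable (fun l => 2/3 * k^2 - D * Real.exp (-(β * l))) volume l₁ l₂ :=
    Continuous.intervalIntegrable (by fun_prop) l₁ l₂
  have hub := intervalIntegral.integral_mono_ae_restrict hl2.le hint hupint
    (haeI.mono fun l hl => hl.2)
  have hlb := intervalIntegral.integral_mono_ae_restrict hl2.le hloint hint
    (haeI.mono fun l hl => hl.1)
  -- compute the comparison integrals
  have hconst : (∫ l in l₁..l₂, (2/3 * k^2 : ℝ)) = 2/3 * k^2 * (l₂ - l₁) := by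
    rw [intervalIntegral.integral_const]; simp [smul_eq_mul]; ring
  have hexpi : (∫ l in l₁..l₂, D * Real.exp (-(β * l)))
      = D / β * (Real.exp (-(β * l₁)) - Real.exp (-(β * l₂))) := exp_int2 D β hβ.ne' l₁ l₂
  have hupval : (∫ l in l₁..l₂, (2/3 * k^2 + D * Real.exp (-(β * l))))
      = 2/3 * k^2 * (l₂ - l₁) + D / β * (Real.exp (-(β * l₁)) - Real.exp (-(β * l₂))) := by
    rw [intervalIntegral.integral_add (Continuous.intervalIntegrable (by fun_prop) l₁ l₂)
      (Continuous.intervalIntegrable (by fun_prop) l₁ l₂), hconst, hexpi]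
  have hloval : (∫ l in l₁..l₂, (2/3 * k^2 - D * Real.exp (-(β * l))))
      = 2/3 * k^2 * (l₂ - l₁) - D / β * (Real.exp (-(β * l₁)) - Real.exp (-(β * l₂))) := by
    rw [intervalIntegral.integral_sub (Continuous.intervalIntegrable (by fun_prop) l₁ l₂)
      (Continuous.intervalIntegrable (by fun_prop) l₁ l₂), hconst, hexpi]
  -- tail estimate
  have htail2 : D / β * (Real.exp (-(β * l₁)) - Real.exp (-(β * l₂))) ≤ L2 := by
    have h1 : Real.exp (-(β * l₁)) ≤ Real.exp (-(β * lam)) :=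
      Real.exp_le_exp.2 (neg_le_neg (mul_le_mul_of_nonneg_left hl1 hβ.le))
    have h2 : 0 < Real.exp (-(β * l₂)) := Real.exp_pos _
    calc D / β * (Real.exp (-(β * l₁)) - Real.exp (-(β * l₂)))
        ≤ D / β * Real.exp (-(β * lam)) := by
          apply mul_le_mul_of_nonneg_left _ (by positivity)
          linarith
      _ ≤ L2 := htail
  have htail3 : 0 ≤ D / β * (Real.exp (-(β * l₁)) - Real.exp (-(β * l₂))) := by
    apply mul_nonneg (by positivity)
    have : Real.exp (-(β * l₂)) ≤ Real.exp (-(β * l₁)) :=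
      Real.exp_le_exp.2 (neg_le_neg (mul_le_mul_of_nonneg_left hl2.le hβ.le))
    linarith
  -- put it together
  rw [hupval] at hub
  rw [hloval] at hlb
  rw [hftc] at hub hlb
  have hS1 := hSpos l₁ hl₁0
  have hS2 := hSpos l₂ hl₂0
  have hexp2 : (0:ℝ) < Real.exp ((2/3) * k^2 * (l₂ - l₁)) := Real.exp_pos _
  have hR : S l₂ / (S l₁ * Real.exp ((2/3) * k^2 * (l₂ - l₁)))
      = Real.exp (Real.log (S l₂) - Real.log (S l₁) - 2/3 * k^2 * (l₂ - l₁)) := by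
    rw [Real.exp_sub, Real.exp_sub, Real.exp_log hS2, Real.exp_log hS1, div_div]
  rw [hR]
  constructor
  · have : -L2 ≤ Real.log (S l₂) - Real.log (S l₁) - 2/3 * k^2 * (l₂ - l₁) := by
      linarith only [hlb, htail2]
    calc (1:ℝ)/2 = Real.exp (-L2) := by
          rw [hL2_def, Real.exp_neg, Real.exp_log two_pos]; norm_num
      _ ≤ _ := Real.exp_le_exp.2 this
  · have : Real.log (S l₂) - Real.log (S l₁) - 2/3 * k^2 * (l₂ - l₁) ≤ L2 := by
      linarith only [hub, htail2]
    calc Real.exp (Real.log (S l₂) - Real.log (S l₁) - 2/3 * k^2 * (l₂ - l₁))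
        ≤ Real.exp L2 := Real.exp_le_exp.2 this
      _ = 2 := by rw [hL2_def, Real.exp_log two_pos]
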